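/- Let A = (Q, Σ, F, δ) be a tree automaton and R a left-linear term rewriting system. Suppose for every rule ℓ → r ∈ R, every α : X → Q, and every q ∈ Q with ℓα ⇝* q, there exists a term t with ℓ →_R⁺ t and tα ⇝* q. Then L(A) is weakly closed under rewriting with respect to R: every term s ∈ L(A) that is not an R-normal form has a reduct s →_R⁺ s' with s' ∈ L(A). -/

import Mathlib

/-- Terms over a ranked signature `F` (with arity `ar`) and variables `V`.
States of a tree automaton are treated as extra constants, i.e. variables. -/
inductive Tm (F : Type) (ar : F → ℕ) (V : Type) : Type
  | var : V → Tm F ar V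
  | node : (f : F) → (Fin (ar f) → Tm F ar V) → Tm F ar V

namespace Tm

variable {F : Type} {ar : F → ℕ}

/-- Substitution. -/
def subst {V W : Type} (σ : V → Tm F ar W) : Tm F ar V → Tm F ar W
  | var x => σ x
  | node f ts => node f (fun i => (ts i).subst σ)

/-- The list of variable occurrences of a term. -/
def varsList {V : Type} : Tm F ar V → List V
  | var x => [x]
  | node f ts => (List.ofFn (fun i => (ts i).varsList)).flatten

/-- A term is linear if every variable occurs at most once. -/
def Linear {V : Type} (t : Tm F ar V) : Prop := t.varsList.Nodup

/-- Subterm relation. -/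
inductive Subtm {V : Type} : Tm F ar V → Tm F ar V → Prop
  | refl (t : Tm F ar V) : Subtm t t
  | child {s : Tm F ar V} {f : F} {ts : Fin (ar f) → Tm F ar V} (i : Fin (ar f)) :
      Subtm s (ts i) → Subtm s (node f ts)

end Tm

/-- Ground terms: terms without variables. -/
abbrev GTm (F : Type) (ar : F → ℕ) : Type := Tm F ar Empty

/-- A ground term viewed as a term over any variable type. -/
def GTm.toTm {F : Type} {ar : F → ℕ} {V : Type} (t : GTm F ar) : Tm F ar V :=
  t.subst (fun e => e.elim)

/-- A (bottom-up, possibly non-deterministic) tree automaton: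
final states and a transition relation `δ`. -/
structure Automaton (F : Type) (ar : F → ℕ) (Q : Type) where
  final : Set Q
  delta : (f : F) → (Fin (ar f) → Q) → Q → Prop

namespace Automaton

variable {F : Type} {ar : F → ℕ} {Q Q' : Type}

/-- One rewrite step `⇝` induced by an automaton on terms over `Σ ∪ Q`. -/
inductive Step (A : Automaton F ar Q) : Tm F ar Q → Tm F ar Q → Prop
  | base {f : F} {qs : Fin (ar f) → Q} {q : Q} :
      A.delta f qs q → Step A (.node f (fun i => .var (qs i))) (.var q)
  | congr {f : F} {ts : Fin (ar f) → Tm F ar Q} {i : Fin (ar f)} {t' : Tm F ar Q} :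
      Step A (ts i) t' → Step A (.node f ts) (.node f (Function.update ts i t'))

/-- The reduction relation `⇝*`. -/
def Steps (A : Automaton F ar Q) : Tm F ar Q → Tm F ar Q → Prop :=
  Relation.ReflTransGen (Step A)

/-- A state is reachable if some ground term reduces to it. -/
def Reachable (A : Automaton F ar Q) (q : Q) : Prop :=
  ∃ t : GTm F ar, A.Steps t.toTm (.var q)

/-- The language of the automaton. -/
def Lang (A : Automaton F ar Q) : Set (GTm F ar) :=
  {t | ∃ q ∈ A.final, A.Steps t.toTm (.var q)}

/-- The product automaton. -/
def prod (A : Automaton F ar Q) (B : Automaton F ar Q') : Automaton F ar (Q × Q') where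
  final := A.final ×ˢ B.final
  delta f qs q := A.delta f (fun i => (qs i).1) q.1 ∧ B.delta f (fun i => (qs i).2) q.2

/-- Determinism. -/
def Deterministic (A : Automaton F ar Q) : Prop :=
  ∀ (f : F) (qs : Fin (ar f) → Q) (q q' : Q), A.delta f qs q → A.delta f qs q' → q = q'

/-- Completeness. -/
def Complete (A : Automaton F ar Q) : Prop :=
  ∀ (f : F) (qs : Fin (ar f) → Q), ∃ q : Q, A.delta f qs q

end Automaton

/-- A term rewriting system: a set of rules over variables `X`. -/
abbrev TRS (F : Type) (ar : F → ℕ) (X : Type) : Type := Set (Tm F ar X × Tm F ar X)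

/-- A TRS is left-linear if no variable occurs twice in a left-hand side. -/
def LeftLinear {F : Type} {ar : F → ℕ} {X : Type} (R : TRS F ar X) : Prop :=
  ∀ p ∈ R, p.1.Linear

/-- One rewrite step `→_R` (on terms over any variable type `V`). -/
inductive RStep {F : Type} {ar : F → ℕ} {X V : Type} (R : TRS F ar X) :
    Tm F ar V → Tm F ar V → Prop
  | base {l r : Tm F ar X} {σ : X → Tm F ar V} :
      (l, r) ∈ R → RStep R (l.subst σ) (r.subst σ)
  | congr {f : F} {ts : Fin (ar f) → Tm F ar V} {i : Fin (ar f)} {t' : Tm F ar V} :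
      RStep R (ts i) t' → RStep R (.node f ts) (.node f (Function.update ts i t'))

/-- `t` is an `R`-normal form. -/
def IsNF {F : Type} {ar : F → ℕ} {X V : Type} (R : TRS F ar X) (t : Tm F ar V) : Prop :=
  ∀ t', ¬ RStep R t t'


section Aux

open Tm Relation

variable {F : Type} {ar : F → ℕ} {Q X : Type}

theorem Tm.subst_subst {V W U : Type} (σ : V → Tm F ar W) (τ : W → Tm F ar U) (t : Tm F ar V) :
    (t.subst σ).subst τ = t.subst (fun x => (σ x).subst τ) := by
  induction t with
  | var x => rfl
  | node g ts ih => simp only [subst]; exact congrArg _ (funext fun i => ih i)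

theorem Tm.subst_eq_on {V W : Type} {σ₁ σ₂ : V → Tm F ar W} (t : Tm F ar V)
    (h : ∀ x ∈ t.varsList, σ₁ x = σ₂ x) : t.subst σ₁ = t.subst σ₂ := by
  induction t with
  | var x => exact h x (by simp [varsList])
  | node g ts ih =>
    simp only [subst]
    refine congrArg _ (funext fun i => ih i (fun x hx => h x ?_))
    simp only [varsList, List.mem_flatten]
    exact ⟨(ts i).varsList, List.mem_ofFn.mpr ⟨i, rfl⟩, hx⟩

theorem Tm.linear_child {V : Type} {g : F} {ts : Fin (ar g) → Tm F ar V}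
    (h : Linear (Tm.node g ts)) (i : Fin (ar g)) : Linear (ts i) := by
  rw [Linear, varsList, List.nodup_flatten] at h
  exact h.1 _ (List.mem_ofFn.mpr ⟨i, rfl⟩)

theorem Tm.linear_disjoint {V : Type} {g : F} {ts : Fin (ar g) → Tm F ar V}
    (h : Linear (Tm.node g ts)) {x : V} {i j : Fin (ar g)}
    (hi : x ∈ (ts i).varsList) (hj : x ∈ (ts j).varsList) : i = j := by
  rw [Linear, varsList, List.nodup_flatten, List.pairwise_ofFn] at h
  by_contra hne
  rcases lt_or_gt_of_ne hne with hlt | hlt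
  · exact h.2 hlt hi hj
  · exact h.2 hlt hj hi

theorem GTm.toTm_subst {t : Tm F ar X} {σ : X → GTm F ar} :
    GTm.toTm ((t.subst σ) : GTm F ar) = (t.subst (fun x => GTm.toTm (σ x)) : Tm F ar Q) :=
  Tm.subst_subst _ _ t

namespace Automaton

variable {A : Automaton F ar Q}

theorem Steps.congr {g : F} {ts : Fin (ar g) → Tm F ar Q} {i : Fin (ar g)} {t' : Tm F ar Q}
    (h : A.Steps (ts i) t') : A.Steps (.node g ts) (.node g (Function.update ts i t')) := by
  induction h with
  | refl => rw [Function.update_eq_self]; exact Relation.ReflTransGen.refl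
  | tail _ hbc ih =>
    refine ih.tail ?_
    have := Step.congr (A := A) (f := g) (ts := Function.update ts i _) (i := i)
      (by rwa [Function.update_self])
    rwa [Function.update_idem] at this

theorem steps_node {g : F} {ts us : Fin (ar g) → Tm F ar Q}
    (h : ∀ i, A.Steps (ts i) (us i)) : A.Steps (.node g ts) (.node g us) := by
  have key : ∀ S : Finset (Fin (ar g)),
      A.Steps (.node g ts) (.node g (fun i => if i ∈ S then us i else ts i)) := by
    intro S
    induction S using Finset.induction_on with
    | empty => simp only [Finset.notMem_empty, if_false]; exact Relation.ReflTransGen.refl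
    | @insert a S ha ih =>
      refine ih.trans ?_
      have step : A.Steps ((fun i => if i ∈ S then us i else ts i) a) (us a) := by
        simp [ha]; exact h a
      have := Steps.congr (A := A) (g := g) (ts := fun i => if i ∈ S then us i else ts i)
        (i := a) step
      show A.Steps _ _
      convert this using 2
      funext i
      by_cases hia : i = a
      · subst hia; simp [Function.update_self]
      · simp [Function.update_of_ne hia, Finset.mem_insert, hia]
  have := key Finset.univ
  simpa using this

theorem not_step_var {q : Q} {t : Tm F ar Q} (h : A.Step (.var q) t) : False := by
  cases h

theorem steps_var_eq {q q' : Q} (h : A.Steps (.var q) (.var q')) : q = q' := by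
  cases h.cases_head with
  | inl h => exact (Tm.var.inj h)
  | inr h => exact absurd h.choose_spec.1 (fun hs => not_step_var hs)

/-- Decomposition of a run on a node. -/
theorem steps_node_decompose {g : F} {cs : Fin (ar g) → Tm F ar Q} {q : Q}
    (h : A.Steps (.node g cs) (.var q)) :
    ∃ qs : Fin (ar g) → Q, (∀ i, A.Steps (cs i) (.var (qs i))) ∧
      A.Steps (.node g (fun i => .var (qs i))) (.var q) := by
  generalize hu : (Tm.node g cs : Tm F ar Q) = u at h
  induction h using Relation.ReflTransGen.head_induction_on generalizing cs with
  | refl => exact absurd hu (by intro h; cases h)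
  | @head u v hstep hsteps ih =>
    subst hu
    cases hstep with
    | @base _ qs q' hd =>
      refine ⟨qs, fun i => Relation.ReflTransGen.refl, ?_⟩
      have : q' = q := steps_var_eq hsteps
      subst this
      exact Relation.ReflTransGen.single (Step.base hd)
    | @congr _ _ i t' hchild =>
      obtain ⟨qs, hqs, hrest⟩ := ih rfl
      refine ⟨qs, fun j => ?_, hrest⟩
      by_cases hji : j = i
      · subst hji
        have := hqs j
        rw [Function.update_self] at this
        exact Relation.ReflTransGen.head hchild this
      · have := hqs j
        rwa [Function.update_of_ne hji] at this

/-- Extract a state assignment from a run on an instance of a linear term. -/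
theorem run_extract {ℓ : Tm F ar X} (hlin : ℓ.Linear) {σ : X → Tm F ar Q} {p : Q}
    (h : A.Steps (ℓ.subst σ) (.var p)) :
    ∃ α : X → Q, (∀ x ∈ ℓ.varsList, A.Steps (σ x) (.var (α x))) ∧
      A.Steps (ℓ.subst (fun x => .var (α x))) (.var p) := by
  induction ℓ generalizing p with
  | var x =>
    refine ⟨fun _ => p, fun y hy => ?_, Relation.ReflTransGen.refl⟩
    simp only [Tm.varsList, List.mem_singleton] at hy
    subst hy
    simpa [Tm.subst] using h
  | node g ls ih =>
    rw [Tm.subst] at h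
    obtain ⟨qs, hqs, hrest⟩ := steps_node_decompose h
    choose β hβ1 hβ2 using fun i => ih i (Tm.linear_child hlin i) (hqs i)
    classical
    refine ⟨fun x => if hx : ∃ i, x ∈ (ls i).varsList then β hx.choose x else p, ?_, ?_⟩
    · intro x hx
      rw [Tm.varsList, List.mem_flatten] at hx
      obtain ⟨l, hl, hxl⟩ := hx
      rw [List.mem_ofFn] at hl
      obtain ⟨i, rfl⟩ := hl
      have hex : ∃ i, x ∈ (ls i).varsList := ⟨i, hxl⟩
      show A.Steps (σ x) (.var (if hx : ∃ i, x ∈ (ls i).varsList then β hx.choose x else p))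
      rw [dif_pos hex]
      exact hβ1 hex.choose x hex.choose_spec
    · rw [Tm.subst]
      refine (steps_node (fun i => ?_)).trans hrest
      have : (ls i).subst (fun x => (.var (if hx : ∃ j, x ∈ (ls j).varsList
          then β hx.choose x else p) : Tm F ar Q)) = (ls i).subst (fun x => .var (β i x)) := by
        refine Tm.subst_eq_on _ (fun x hx => ?_)
        have hex : ∃ j, x ∈ (ls j).varsList := ⟨i, hx⟩
        show (Tm.var (if hx : ∃ j, x ∈ (ls j).varsList then β hx.choose x else p) : Tm F ar Q)
          = .var (β i x)
        rw [dif_pos hex]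
        have : hex.choose = i := Tm.linear_disjoint hlin hex.choose_spec hx
        rw [this]
      rw [this]
      exact hβ2 i

end Automaton

theorem RStep.subst_closed {V W : Type} {R : TRS F ar X} {u v : Tm F ar V}
    (h : RStep R u v) (σ : V → Tm F ar W) : RStep R (u.subst σ) (v.subst σ) := by
  induction h with
  | @base l r τ hmem =>
    rw [Tm.subst_subst, Tm.subst_subst]
    exact RStep.base hmem
  | @congr g ts i t' _ ih =>
    have key := RStep.congr (R := R) (f := g) (ts := fun j => (ts j).subst σ) (i := i) ih
    have he : (Tm.node g (Function.update ts i t')).subst σ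
        = .node g (Function.update (fun j => (ts j).subst σ) i (t'.subst σ)) := by
      rw [Tm.subst]
      refine congrArg _ (funext fun j => ?_)
      by_cases hji : j = i
      · subst hji; simp [Function.update_self]
      · simp [Function.update_of_ne hji]
    rw [show (Tm.node g ts).subst σ = .node g (fun j => (ts j).subst σ) from rfl, he]
    exact key

theorem RSteps.subst_closed {V W : Type} {R : TRS F ar X} {u v : Tm F ar V}
    (h : Relation.TransGen (RStep R) u v) (σ : V → Tm F ar W) :
    Relation.TransGen (RStep R) (u.subst σ) (v.subst σ) := by
  induction h with
  | single h => exact Relation.TransGen.single (h.subst_closed σ)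
  | tail _ h ih => exact ih.tail (h.subst_closed σ)

theorem RSteps.congr {V : Type} {R : TRS F ar X} {g : F} {ts : Fin (ar g) → Tm F ar V}
    {i : Fin (ar g)} {t' : Tm F ar V} (h : Relation.TransGen (RStep R) (ts i) t') :
    Relation.TransGen (RStep R) (.node g ts) (.node g (Function.update ts i t')) := by
  induction h with
  | single h => exact Relation.TransGen.single (RStep.congr h)
  | tail _ h ih =>
    refine ih.tail ?_
    have := RStep.congr (R := R) (f := g) (ts := Function.update ts i _) (i := i)
      (by rwa [Function.update_self])
    rwa [Function.update_idem] at this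

/-- Substitution simulation for automaton runs. -/
theorem Automaton.steps_subst {A : Automaton F ar Q} {t : Tm F ar X} {α : X → Q}
    {σ : X → Tm F ar Q} (h : ∀ x, A.Steps (σ x) (.var (α x))) :
    A.Steps (t.subst σ) (t.subst (fun x => .var (α x))) := by
  induction t with
  | var x => exact h x
  | node g ts ih => exact Automaton.steps_node ih

/-- The main lemma. -/
theorem main_lemma {A : Automaton F ar Q} {R : TRS F ar X} (hll : LeftLinear R)
    (h : ∀ p ∈ R, ∀ (α : X → Q) (q : Q),
      A.Steps (p.1.subst (fun x => .var (α x))) (.var q) →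
      ∃ t : Tm F ar X, Relation.TransGen (RStep R) p.1 t ∧
        A.Steps (t.subst (fun x => .var (α x))) (.var q))
    (d₀ : GTm F ar) (q₀ : Q) (hd₀ : A.Steps d₀.toTm (.var q₀)) :
    ∀ {s u : GTm F ar}, RStep R s u → ∀ {q : Q}, A.Steps s.toTm (.var q) →
      ∃ s' : GTm F ar, Relation.TransGen (RStep R) s s' ∧ A.Steps s'.toTm (.var q) := by
  intro s u hstep
  induction hstep with
  | @base l r σ hmem =>
    intro q hrun
    rw [GTm.toTm_subst] at hrun
    obtain ⟨α₀, hα₀, hlrun⟩ := Automaton.run_extract (hll _ hmem) hrun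
    classical
    set α : X → Q := fun x => if x ∈ l.varsList then α₀ x else q₀ with hα
    set σ' : X → GTm F ar := fun x => if x ∈ l.varsList then σ x else d₀ with hσ'
    have hlα : (l.subst (fun x => (.var (α x) : Tm F ar Q))) = l.subst (fun x => .var (α₀ x)) :=
      Tm.subst_eq_on _ (fun x hx => by simp [hα, hx])
    obtain ⟨t, htred, htrun⟩ := h _ hmem α q (by rwa [hlα])
    refine ⟨t.subst σ', ?_, ?_⟩
    · have : l.subst σ = l.subst σ' :=
        Tm.subst_eq_on _ (fun x hx => by simp [hσ', hx])
      rw [this]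
      exact RSteps.subst_closed htred σ'
    · rw [GTm.toTm_subst]
      refine (Automaton.steps_subst (α := α) fun x => ?_).trans htrun
      by_cases hx : x ∈ l.varsList
      · simpa [hσ', hα, hx] using hα₀ x hx
      · simpa [hσ', hα, hx] using hd₀
  | @congr g ts i t' hchild ih =>
    intro q hrun
    have hdef : GTm.toTm (Tm.node g ts : GTm F ar) =
        (Tm.node g (fun j => GTm.toTm (ts j)) : Tm F ar Q) := rfl
    rw [hdef] at hrun
    obtain ⟨qs, hqs, hrest⟩ := Automaton.steps_node_decompose hrun
    obtain ⟨si, hsired, hsirun⟩ := ih (hqs i)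
    refine ⟨.node g (Function.update ts i si), RSteps.congr hsired, ?_⟩
    have hdef2 : GTm.toTm (Tm.node g (Function.update ts i si) : GTm F ar) =
        (Tm.node g (fun j => GTm.toTm (Function.update ts i si j)) : Tm F ar Q) := rfl
    rw [hdef2]
    refine (Automaton.steps_node fun j => ?_).trans hrest
    by_cases hji : j = i
    · subst hji; rw [Function.update_self]; exact hsirun
    · rw [Function.update_of_ne hji]; exact hqs j

end Aux

/-- Criterion for weak closure under rewriting: if whenever `ℓα ⇝* q` some reduct `t` of `ℓ`
satisfies `tα ⇝* q`, then every non-normal-form in `L(A)` has a reduct in `L(A)`. -/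
theorem lang_weakly_closed_under_rewriting {F : Type} {ar : F → ℕ} {Q X : Type}
    (A : Automaton F ar Q) (R : TRS F ar X) (hll : LeftLinear R)
    (h : ∀ p ∈ R, ∀ (α : X → Q) (q : Q),
      A.Steps (p.1.subst (fun x => .var (α x))) (.var q) →
      ∃ t : Tm F ar X, Relation.TransGen (RStep R) p.1 t ∧
        A.Steps (t.subst (fun x => .var (α x))) (.var q)) :
    ∀ s ∈ A.Lang, ¬ IsNF R s →
      ∃ s' : GTm F ar, Relation.TransGen (RStep R) s s' ∧ s' ∈ A.Lang  := by
  intro s hs hnf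
  obtain ⟨qf, hqf, hrun⟩ := hs
  rw [IsNF] at hnf
  push_neg at hnf
  obtain ⟨u, hu⟩ := hnf
  obtain ⟨s', hred, hrun'⟩ := main_lemma hll h s qf hrun hu hrun
  exact ⟨s', hred, qf, hqf, hrun'⟩
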